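/- Define G₂ = diag-block(0, Ā⁻¹, 0) (the (n+1)×(n+1) matrix whose interior block is Ā⁻¹ and boundary rows/columns are zero). Under the consistency relations on A, it holds that AG₂ = I − e_L(𝟙 − x/ℓ)ᵀ − e_R xᵀ/ℓ. -/

import Mathlib

open Matrix

/-- The zero-padded interior inverse `G₂` satisfies
`A G₂ = I - e_L (𝟙 - x/ℓ)ᵀ - e_R xᵀ/ℓ`. -/
theorem stmt6 (n : ℕ) (hn : 2 ≤ n) (h : ℝ) (hh : 0 < h)
    (A : Matrix (Fin (n+1)) (Fin (n+1)) ℝ) (hAsym : Aᵀ = A)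
    (x : Fin (n+1) → ℝ) (hx : x = fun (i : Fin (n+1)) => h * ((i : ℕ) : ℝ))
    (ℓ : ℝ) (hℓ : ℓ = n * h)
    (eL eR : Fin (n+1) → ℝ)
    (heL : eL = fun i => if i = 0 then 1 else 0)
    (heR : eR = fun i => if i = Fin.last n then 1 else 0)
    (hA1 : A *ᵥ (fun i => ℓ * 1 - x i) = eL - eR)
    (hAx : A *ᵥ x = eR - eL)
    (emb : Fin (n-1) → Fin (n+1))
    (hemb : emb = fun i => ⟨(i : ℕ) + 1, by have := i.isLt; omega⟩)
    (Ab : Matrix (Fin (n-1)) (Fin (n-1)) ℝ)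
    (hAb : Ab = Matrix.of fun i j => A (emb i) (emb j))
    (hAbinv : IsUnit Ab.det)
    (G2 : Matrix (Fin (n+1)) (Fin (n+1)) ℝ)
    (hG2int : ∀ i j : Fin (n-1), G2 (emb i) (emb j) = Ab⁻¹ i j)
    (hG2bd : ∀ j : Fin (n+1), G2 0 j = 0 ∧ G2 (Fin.last n) j = 0
      ∧ G2 j 0 = 0 ∧ G2 j (Fin.last n) = 0) :
    A * G2 = 1 - Matrix.of (fun i j => eL i * (1 - x j / ℓ))
      - Matrix.of (fun i j => eR i * (x j / ℓ)) := by
  have hℓ0 : ℓ ≠ 0 := by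
    rw [hℓ]
    have : (0:ℝ) < n := by positivity
    positivity
  have hx0 : x 0 = 0 := by simp [hx]
  have hxl : x (Fin.last n) = ℓ := by
    rw [hx, hℓ]; simp [Fin.last]; ring
  have h0l : (0 : Fin (n+1)) ≠ Fin.last n := by
    intro hc
    have := congrArg Fin.val hc
    simp [Fin.last] at this
    omega
  have hemb0 : ∀ p : Fin (n-1), emb p ≠ 0 := by
    intro p hc
    rw [hemb] at hc
    have := congrArg Fin.val hc
    simp at this
  have hembl : ∀ p : Fin (n-1), emb p ≠ Fin.last n := by
    intro p hc
    rw [hemb] at hc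
    have := congrArg Fin.val hc
    have hp := p.isLt
    simp [Fin.last] at this
    omega
  have hembinj : Function.Injective emb := by
    intro a b hab
    rw [hemb] at hab
    have := congrArg Fin.val hab
    simp at this
    exact Fin.ext this
  have hcase : ∀ i : Fin (n+1), i = 0 ∨ i = Fin.last n ∨ ∃ p, emb p = i := by
    intro i
    rcases Nat.lt_or_ge i.1 1 with h1 | h1
    · left; exact Fin.ext (by rw [Fin.val_zero]; omega)
    rcases Nat.lt_or_ge i.1 n with h2 | h2
    · right; right
      refine ⟨⟨i.1 - 1, by omega⟩, ?_⟩
      rw [hemb]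
      exact Fin.ext (by simp; omega)
    · right; left
      exact Fin.ext (by simp [Fin.last]; omega)
  have hsplit : ∀ f : Fin (n+1) → ℝ,
      ∑ k, f k = f 0 + f (Fin.last n) + ∑ p, f (emb p) := by
    intro f
    have huniv : (Finset.univ : Finset (Fin (n+1))) =
        insert 0 (insert (Fin.last n) (Finset.univ.image emb)) := by
      ext i
      simp only [Finset.mem_univ, Finset.mem_insert, Finset.mem_image, true_iff]
      rcases hcase i with h' | h' | ⟨p, hp⟩
      · left; exact h'
      · right; left; exact h'
      · right; right; exact ⟨p, trivial, hp⟩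
    rw [huniv, Finset.sum_insert, Finset.sum_insert, Finset.sum_image, add_assoc]
    · intro a _ b _ hab; exact hembinj hab
    · simp only [Finset.mem_image, Finset.mem_univ, true_and]
      rintro ⟨p, hp⟩
      exact hembl p hp
    · simp only [Finset.mem_insert, Finset.mem_image, Finset.mem_univ, true_and]
      rintro (hc | ⟨p, hp⟩)
      · exact h0l hc
      · exact hemb0 p hp
  have hAsym' : ∀ i j, A i j = A j i := by
    intro i j
    calc A i j = Aᵀ j i := (Matrix.transpose_apply A j i).symm
      _ = A j i := by rw [hAsym]
  have hAbsym : ∀ p q, Ab p q = Ab q p := by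
    intro p q; rw [hAb]; simp [hAsym' (emb p) (emb q)]
  have hinvsym : ∀ p q, Ab⁻¹ p q = Ab⁻¹ q p := by
    intro p q
    have h1 : Abᵀ = Ab := by ext a b; rw [Matrix.transpose_apply, hAbsym]
    have h2 : (Ab⁻¹)ᵀ = Ab⁻¹ := by
      rw [Matrix.transpose_nonsing_inv, h1]
    calc Ab⁻¹ p q = (Ab⁻¹)ᵀ q p := rfl
      _ = Ab⁻¹ q p := by rw [h2]
  have hmul : Ab * Ab⁻¹ = 1 := Matrix.mul_nonsing_inv Ab hAbinv
  have hmul' : Ab⁻¹ * Ab = 1 := Matrix.nonsing_inv_mul Ab hAbinv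
  -- interior consistency relations
  have hR1 : ∀ p : Fin (n-1),
      ∑ q, Ab p q * (ℓ - x (emb q)) = -(ℓ * A (emb p) 0) := by
    intro p
    have h1 := congrFun hA1 (emb p)
    rw [Matrix.mulVec, dotProduct] at h1
    rw [hsplit (fun k => A (emb p) k * (ℓ * 1 - x k))] at h1
    simp only [Pi.sub_apply, heL, heR] at h1
    rw [if_neg (hemb0 p), if_neg (hembl p)] at h1
    simp only [hx0, hxl] at h1
    have h2 : ∑ q, Ab p q * (ℓ - x (emb q)) =
        ∑ q, A (emb p) (emb q) * (ℓ * 1 - x (emb q)) := by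
      apply Finset.sum_congr rfl
      intro q _
      simp [hAb]
    rw [h2]
    linarith [h1]
  have hR2 : ∀ p : Fin (n-1),
      ∑ q, Ab p q * x (emb q) = -(ℓ * A (emb p) (Fin.last n)) := by
    intro p
    have h1 := congrFun hAx (emb p)
    rw [Matrix.mulVec, dotProduct] at h1
    rw [hsplit (fun k => A (emb p) k * x k)] at h1
    simp only [Pi.sub_apply, heL, heR] at h1
    rw [if_neg (hemb0 p), if_neg (hembl p)] at h1
    simp only [hx0, hxl] at h1
    have h2 : ∑ q, Ab p q * x (emb q) =
        ∑ q, A (emb p) (emb q) * x (emb q) := by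
      apply Finset.sum_congr rfl
      intro q _
      simp [hAb]
    rw [h2]
    linarith [h1]
  -- solve for the boundary rows using the inverse
  have hmv : ∀ (v w : Fin (n-1) → ℝ), Ab *ᵥ v = w → v = Ab⁻¹ *ᵥ w := by
    intro v w hvw
    rw [← hvw, Matrix.mulVec_mulVec, hmul', Matrix.one_mulVec]
  have key0 : ∀ q : Fin (n-1),
      ∑ p, A 0 (emb p) * Ab⁻¹ p q = -(1 - x (emb q) / ℓ) := by
    intro q
    have hv : Ab *ᵥ (fun r => -(1 - x (emb r) / ℓ)) = (fun r => A (emb r) 0) := by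
      funext r
      rw [Matrix.mulVec, dotProduct]
      have : ∀ s : Fin (n-1), Ab r s * -(1 - x (emb s) / ℓ) =
          -(1/ℓ) * (Ab r s * (ℓ - x (emb s))) := by
        intro s; field_simp
      rw [Finset.sum_congr rfl (fun s _ => this s), ← Finset.mul_sum, hR1 r]
      field_simp
    have := congrFun (hmv _ _ hv) q
    rw [Matrix.mulVec, dotProduct] at this
    rw [this]
    apply Finset.sum_congr rfl
    intro p _
    rw [hAsym' 0 (emb p), hinvsym p q]
    ring
  have keyl : ∀ q : Fin (n-1),
      ∑ p, A (Fin.last n) (emb p) * Ab⁻¹ p q = -(x (emb q) / ℓ) := by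
    intro q
    have hv : Ab *ᵥ (fun r => -(x (emb r) / ℓ)) = (fun r => A (emb r) (Fin.last n)) := by
      funext r
      rw [Matrix.mulVec, dotProduct]
      have : ∀ s : Fin (n-1), Ab r s * -(x (emb s) / ℓ) =
          -(1/ℓ) * (Ab r s * x (emb s)) := by
        intro s; field_simp
      rw [Finset.sum_congr rfl (fun s _ => this s), ← Finset.mul_sum, hR2 r]
      field_simp
    have := congrFun (hmv _ _ hv) q
    rw [Matrix.mulVec, dotProduct] at this
    rw [this]
    apply Finset.sum_congr rfl
    intro p _
    rw [hAsym' (Fin.last n) (emb p), hinvsym p q]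
    ring
  -- main entrywise computation
  ext i j
  rw [Matrix.sub_apply, Matrix.sub_apply, Matrix.mul_apply, Matrix.of_apply,
    Matrix.of_apply, Matrix.one_apply]
  rw [hsplit (fun k => A i k * G2 k j)]
  rw [(hG2bd j).1, (hG2bd j).2.1]
  simp only [mul_zero, zero_add, add_zero]
  rcases hcase j with hj | hj | ⟨q, hj⟩
  · subst hj
    have hz : ∀ p, G2 (emb p) 0 = 0 := fun p => (hG2bd (emb p)).2.2.1
    simp only [hz, mul_zero, Finset.sum_const_zero, hx0, heL, heR]
    by_cases hi : i = 0 <;> simp [hi, zero_div]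
  · subst hj
    have hz : ∀ p, G2 (emb p) (Fin.last n) = 0 := fun p => (hG2bd (emb p)).2.2.2
    simp only [hz, mul_zero, Finset.sum_const_zero, hxl, heL, heR]
    rw [div_self hℓ0]
    by_cases hi : i = Fin.last n
    · simp [hi, if_neg h0l]
    · by_cases hi0 : i = 0 <;> simp [hi, hi0]
  · subst hj
    have hz : ∀ p, G2 (emb p) (emb q) = Ab⁻¹ p q := fun p => hG2int p q
    simp only [hz]
    rcases hcase i with hi | hi | ⟨r, hi⟩
    · subst hi
      rw [key0 q]
      rw [if_neg (fun hc => hemb0 q hc.symm)]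
      simp only [heL, heR, if_pos rfl, if_neg h0l]
      ring
    · subst hi
      rw [keyl q]
      rw [if_neg (fun hc => hembl q hc.symm)]
      simp only [heL, heR, if_pos rfl, if_neg (Ne.symm h0l)]
      ring
    · subst hi
      have : ∑ p, A (emb r) (emb p) * Ab⁻¹ p q = (Ab * Ab⁻¹) r q := by
        rw [Matrix.mul_apply]
        apply Finset.sum_congr rfl
        intro p _
        rw [hAb]; simp
      rw [this, hmul, Matrix.one_apply]
      simp only [heL, heR, if_neg (hemb0 r), if_neg (hembl r)]
      by_cases hrq : r = q
      · subst hrq; simp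
      · rw [if_neg hrq, if_neg (fun hc => hrq (hembinj hc))]
        ring
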